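/- Let (X, T) be a uniquely ergodic classical dynamical system with unique invariant measure μ. Then the set σ := { λ ∈ ℂ : |λ| = 1 and there exists a continuous u : X → ℂ, not identically zero, with u(T x) = λ·u(x) for all x ∈ X } is a subgroup of the circle group: it contains 1, is closed under multiplication, and is closed under inversion (complex conjugation). -/

import Mathlib

open MeasureTheory Filter
open scoped NNReal ENNReal
open Topology TopologicalSpace Set

section KB

variable {X : Type*} [TopologicalSpace X] [CompactSpace X] [T2Space X]

noncomputable def myU : Ultrafilter ℕ := Ultrafilter.of atTop

lemma myU_le_atTop : (myU : Filter ℕ) ≤ atTop := Ultrafilter.of_le _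

/-- Birkhoff average of `g` along the orbit of `x₀`. -/
noncomputable def bAvg (T : X → X) (x₀ : X) (g : C(X, ℝ)) (N : ℕ) : ℝ :=
  (∑ k ∈ Finset.range N, g (T^[k] x₀)) / N

lemma abs_bAvg_le (T : X → X) (x₀ : X) (g : C(X, ℝ)) (N : ℕ) :
    |bAvg T x₀ g N| ≤ ‖g‖ := by
  rcases Nat.eq_zero_or_pos N with h | h
  · simp [bAvg, h, norm_nonneg]
  · rw [bAvg, abs_div]
    rw [div_le_iff₀ (by positivity : (0:ℝ) < |(N:ℝ)|)]
    calc |∑ k ∈ Finset.range N, g (T^[k] x₀)|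
        ≤ ∑ k ∈ Finset.range N, |g (T^[k] x₀)| := Finset.abs_sum_le_sum_abs _ _
      _ ≤ ∑ _k ∈ Finset.range N, ‖g‖ := by
          refine Finset.sum_le_sum fun i _ => ?_
          exact g.norm_coe_le_norm _
      _ = N * ‖g‖ := by simp [Finset.sum_const, mul_comm]
      _ ≤ ‖g‖ * |(N:ℝ)| := by
          rw [abs_of_nonneg (by positivity)]; ring_nf; exact le_rfl

lemma exists_bLim (T : X → X) (x₀ : X) (g : C(X, ℝ)) :
    ∃ l, Tendsto (bAvg T x₀ g) (myU : Filter ℕ) (𝓝 l) := by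
  have hmem : Set.Icc (-‖g‖) ‖g‖ ∈ Ultrafilter.map (bAvg T x₀ g) myU := by
    have : ∀ N, bAvg T x₀ g N ∈ Set.Icc (-‖g‖) ‖g‖ := fun N =>
      abs_le.mp (abs_bAvg_le T x₀ g N)
    exact Filter.mem_map.mpr (Filter.univ_mem' this)
  obtain ⟨l, -, hl⟩ := (isCompact_Icc (a := -‖g‖) (b := ‖g‖)).ultrafilter_le_nhds
    (Ultrafilter.map (bAvg T x₀ g) myU) (le_principal_iff.mpr hmem)
  exact ⟨l, hl⟩

noncomputable def bLim (T : X → X) (x₀ : X) (g : C(X, ℝ)) : ℝ :=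
  (exists_bLim T x₀ g).choose

lemma tendsto_bLim (T : X → X) (x₀ : X) (g : C(X, ℝ)) :
    Tendsto (bAvg T x₀ g) (myU : Filter ℕ) (𝓝 (bLim T x₀ g)) :=
  (exists_bLim T x₀ g).choose_spec

end KB

section KB2

variable {X : Type*} [TopologicalSpace X] [CompactSpace X] [T2Space X]
variable (T : X → X) (x₀ : X)

lemma bLim_add (g h : C(X, ℝ)) : bLim T x₀ (g + h) = bLim T x₀ g + bLim T x₀ h := by
  have h1 : Tendsto (bAvg T x₀ (g + h)) (myU : Filter ℕ)
      (𝓝 (bLim T x₀ g + bLim T x₀ h)) := by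
    have : bAvg T x₀ (g + h) = fun N => bAvg T x₀ g N + bAvg T x₀ h N := by
      funext N
      simp [bAvg, Finset.sum_add_distrib, add_div]
    rw [this]
    exact (tendsto_bLim T x₀ g).add (tendsto_bLim T x₀ h)
  exact tendsto_nhds_unique (tendsto_bLim T x₀ (g + h)) h1

lemma le_bLim {g : C(X, ℝ)} {c : ℝ} (hc : ∀ n, c ≤ g (T^[n] x₀)) : c ≤ bLim T x₀ g := by
  refine ge_of_tendsto (tendsto_bLim T x₀ g) ?_
  filter_upwards [myU_le_atTop (Filter.eventually_ge_atTop 1)] with N hN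
  rw [bAvg, le_div_iff₀ (by positivity : (0:ℝ) < N)]
  calc c * N = ∑ _k ∈ Finset.range N, c := by simp [mul_comm]
    _ ≤ ∑ k ∈ Finset.range N, g (T^[k] x₀) := Finset.sum_le_sum fun i _ => hc i

lemma bLim_le {g : C(X, ℝ)} {c : ℝ} (hc : ∀ n, g (T^[n] x₀) ≤ c) : bLim T x₀ g ≤ c := by
  refine le_of_tendsto (tendsto_bLim T x₀ g) ?_
  filter_upwards [myU_le_atTop (Filter.eventually_ge_atTop 1)] with N hN
  rw [bAvg, div_le_iff₀ (by positivity : (0:ℝ) < N)]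
  calc ∑ k ∈ Finset.range N, g (T^[k] x₀) ≤ ∑ _k ∈ Finset.range N, c :=
        Finset.sum_le_sum fun i _ => hc i
    _ = c * N := by simp [mul_comm]

lemma bLim_nonneg {g : C(X, ℝ)} (hg : ∀ x, 0 ≤ g x) : 0 ≤ bLim T x₀ g :=
  le_bLim T x₀ fun n => hg _

lemma bLim_one : bLim T x₀ 1 = 1 :=
  le_antisymm (bLim_le T x₀ fun n => le_rfl) (le_bLim T x₀ fun n => le_rfl)

lemma bLim_comp (hT : Continuous T) (g : C(X, ℝ)) :
    bLim T x₀ (g.comp ⟨T, hT⟩) = bLim T x₀ g := by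
  set f : ℕ → ℝ := fun k => g (T^[k] x₀) with hf
  have key : ∀ N : ℕ, bAvg T x₀ (g.comp ⟨T, hT⟩) N
      = bAvg T x₀ g N + (f N - f 0) / N := by
    intro N
    have h1 : ∀ k, (g.comp ⟨T, hT⟩ : C(X, ℝ)) (T^[k] x₀) = f (k + 1) := by
      intro k
      simp [hf, ContinuousMap.comp_apply, Function.iterate_succ_apply']
    have h2 : ∑ k ∈ Finset.range N, f (k + 1)
        = (∑ k ∈ Finset.range N, f k) + (f N - f 0) := by
      have := Finset.sum_range_succ' f N
      have h3 := Finset.sum_range_succ f N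
      rw [h3] at this
      linarith
    simp only [bAvg, h1, h2, add_div]
    rfl
  have h0 : Tendsto (fun N : ℕ => (f N - f 0) / N) (myU : Filter ℕ) (𝓝 0) := by
    have hb : ∀ N : ℕ, ‖(f N - f 0) / N‖ ≤ (2 * ‖g‖) / N := by
      intro N
      rcases Nat.eq_zero_or_pos N with h | h
      · simp [h]
      · rw [norm_div, Real.norm_natCast]
        gcongr
        calc ‖f N - f 0‖ ≤ ‖f N‖ + ‖f 0‖ := norm_sub_le _ _
          _ ≤ ‖g‖ + ‖g‖ := add_le_add (g.norm_coe_le_norm _) (g.norm_coe_le_norm _)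
          _ = 2 * ‖g‖ := by ring
    refine squeeze_zero_norm hb ?_
    exact (tendsto_const_div_atTop_nhds_zero_nat (2 * ‖g‖)).mono_left myU_le_atTop
  have h1 : Tendsto (bAvg T x₀ (g.comp ⟨T, hT⟩)) (myU : Filter ℕ) (𝓝 (bLim T x₀ g + 0)) := by
    have heq : bAvg T x₀ (g.comp ⟨T, hT⟩)
        = fun N => bAvg T x₀ g N + (f N - f 0) / N := funext key
    rw [heq]
    exact (tendsto_bLim T x₀ g).add h0
  rw [add_zero] at h1
  exact tendsto_nhds_unique (tendsto_bLim T x₀ (g.comp ⟨T, hT⟩)) h1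

end KB2

section KB3

variable {X : Type*} [TopologicalSpace X] [CompactSpace X] [T2Space X]
variable (T : X → X) (x₀ : X)

/-- Test functions for the Riesz-type content: nonnegative, `≥ 1` on `K`. -/
def testS (K : Set X) : Set C(X, ℝ) := {g | (∀ x, 0 ≤ g x) ∧ ∀ x ∈ K, 1 ≤ g x}

lemma one_mem_testS (K : Set X) : (1 : C(X, ℝ)) ∈ testS K :=
  ⟨fun _ => zero_le_one, fun _ _ => le_rfl⟩

/-- The content value of `K`. -/
noncomputable def lamR (K : Set X) : ℝ := sInf (bLim T x₀ '' testS K)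

lemma lamR_bddBelow (K : Set X) : ∀ b ∈ bLim T x₀ '' testS K, (0:ℝ) ≤ b := by
  rintro b ⟨g, hg, rfl⟩
  exact bLim_nonneg T x₀ hg.1

lemma lamR_nonneg (K : Set X) : 0 ≤ lamR T x₀ K :=
  le_csInf ⟨_, Set.mem_image_of_mem _ (one_mem_testS K)⟩ (lamR_bddBelow T x₀ K)

lemma lamR_le {K : Set X} {g : C(X, ℝ)} (hg : g ∈ testS K) : lamR T x₀ K ≤ bLim T x₀ g :=
  csInf_le ⟨0, lamR_bddBelow T x₀ K⟩ (Set.mem_image_of_mem _ hg)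

lemma lamR_mono {K₁ K₂ : Set X} (h : K₁ ⊆ K₂) : lamR T x₀ K₁ ≤ lamR T x₀ K₂ := by
  refine csInf_le_csInf ⟨0, lamR_bddBelow T x₀ K₁⟩
    ⟨_, Set.mem_image_of_mem _ (one_mem_testS K₂)⟩ (Set.image_mono ?_)
  rintro g ⟨hg0, hg1⟩
  exact ⟨hg0, fun x hx => hg1 x (h hx)⟩

lemma lamR_exists_lt {K : Set X} {ε : ℝ} (hε : 0 < ε) :
    ∃ g ∈ testS K, bLim T x₀ g < lamR T x₀ K + ε := by
  obtain ⟨b, hb, hlt⟩ := exists_lt_of_csInf_lt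
    (⟨_, Set.mem_image_of_mem _ (one_mem_testS K)⟩ :
      (bLim T x₀ '' testS K).Nonempty) (lt_add_of_pos_right _ hε)
  obtain ⟨g, hg, rfl⟩ := hb
  exact ⟨g, hg, hlt⟩

lemma lamR_union_le (K₁ K₂ : Set X) :
    lamR T x₀ (K₁ ∪ K₂) ≤ lamR T x₀ K₁ + lamR T x₀ K₂ := by
  refine le_of_forall_pos_le_add fun ε hε => ?_
  obtain ⟨g₁, hg₁, hlt₁⟩ := lamR_exists_lt T x₀ (K := K₁) (half_pos hε)
  obtain ⟨g₂, hg₂, hlt₂⟩ := lamR_exists_lt T x₀ (K := K₂) (half_pos hε)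
  have hmem : g₁ + g₂ ∈ testS (K₁ ∪ K₂) := by
    constructor
    · intro x; simpa using add_nonneg (hg₁.1 x) (hg₂.1 x)
    · rintro x (hx | hx)
      · simpa using le_add_of_le_of_nonneg (hg₁.2 x hx) (hg₂.1 x)
      · simpa using le_add_of_nonneg_of_le (hg₁.1 x) (hg₂.2 x hx)
  calc lamR T x₀ (K₁ ∪ K₂) ≤ bLim T x₀ (g₁ + g₂) := lamR_le T x₀ hmem
    _ = bLim T x₀ g₁ + bLim T x₀ g₂ := bLim_add T x₀ g₁ g₂
    _ ≤ (lamR T x₀ K₁ + ε / 2) + (lamR T x₀ K₂ + ε / 2) :=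
        add_le_add hlt₁.le hlt₂.le
    _ = lamR T x₀ K₁ + lamR T x₀ K₂ + ε := by ring

lemma lamR_union_disjoint {K₁ K₂ : Set X} (hK₁ : IsClosed K₁) (hK₂ : IsClosed K₂)
    (hd : Disjoint K₁ K₂) :
    lamR T x₀ K₁ + lamR T x₀ K₂ ≤ lamR T x₀ (K₁ ∪ K₂) := by
  refine le_csInf ⟨_, Set.mem_image_of_mem _ (one_mem_testS _)⟩ ?_
  rintro b ⟨g, hg, rfl⟩
  obtain ⟨φ, hφ₁, hφ₂, hφ01⟩ := exists_continuous_zero_one_of_isClosed hK₁ hK₂ hd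
  set g₁ : C(X, ℝ) := g * (1 - φ) with hg₁def
  set g₂ : C(X, ℝ) := g * φ with hg₂def
  have hsplit : g = g₁ + g₂ := by
    ext x
    simp [hg₁def, hg₂def]
    ring
  have hmem₁ : g₁ ∈ testS K₁ := by
    constructor
    · intro x
      have := (hφ01 x).2
      have := hg.1 x
      simp only [hg₁def, ContinuousMap.mul_apply, ContinuousMap.sub_apply,
        ContinuousMap.one_apply]
      nlinarith [(hφ01 x).1]
    · intro x hx
      have h0 : φ x = 0 := hφ₁ hx
      have := hg.2 x (Or.inl hx)
      simp only [hg₁def, ContinuousMap.mul_apply, ContinuousMap.sub_apply,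
        ContinuousMap.one_apply, h0]
      linarith
  have hmem₂ : g₂ ∈ testS K₂ := by
    constructor
    · intro x
      exact mul_nonneg (hg.1 x) (hφ01 x).1
    · intro x hx
      have h1 : φ x = 1 := hφ₂ hx
      have := hg.2 x (Or.inr hx)
      simp only [hg₂def, ContinuousMap.mul_apply, h1]
      linarith
  calc lamR T x₀ K₁ + lamR T x₀ K₂ ≤ bLim T x₀ g₁ + bLim T x₀ g₂ :=
        add_le_add (lamR_le T x₀ hmem₁) (lamR_le T x₀ hmem₂)
    _ = bLim T x₀ (g₁ + g₂) := (bLim_add T x₀ g₁ g₂).symm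
    _ = bLim T x₀ g := by rw [← hsplit]

lemma one_le_lamR_of_orbit {K : Set X} (h : ∀ n, T^[n] x₀ ∈ K) : 1 ≤ lamR T x₀ K := by
  refine le_csInf ⟨_, Set.mem_image_of_mem _ (one_mem_testS _)⟩ ?_
  rintro b ⟨g, hg, rfl⟩
  exact le_bLim T x₀ fun n => hg.2 _ (h n)

lemma lamR_univ : lamR T x₀ (Set.univ : Set X) = 1 := by
  refine le_antisymm ?_ (one_le_lamR_of_orbit T x₀ fun n => Set.mem_univ _)
  have := lamR_le T x₀ (one_mem_testS (Set.univ : Set X))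
  rwa [bLim_one] at this

lemma lamR_le_image (hT : Continuous T) (C : Set X) :
    lamR T x₀ C ≤ lamR T x₀ (T '' C) := by
  refine le_csInf ⟨_, Set.mem_image_of_mem _ (one_mem_testS _)⟩ ?_
  rintro b ⟨g, hg, rfl⟩
  have hmem : g.comp ⟨T, hT⟩ ∈ testS C := by
    refine ⟨fun x => hg.1 _, fun x hx => ?_⟩
    exact hg.2 _ (Set.mem_image_of_mem T hx)
  have := lamR_le T x₀ hmem
  rwa [bLim_comp T x₀ hT g] at this

/-- The Krylov–Bogolyubov content. -/
noncomputable def kbContent : MeasureTheory.Content X where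
  toFun K := Real.toNNReal (lamR T x₀ K)
  mono' K₁ K₂ h := Real.toNNReal_mono (lamR_mono T x₀ h)
  sup_disjoint' K₁ K₂ hd h₁ h₂ := by
    show Real.toNNReal (lamR T x₀ ↑(K₁ ⊔ K₂)) = _
    rw [TopologicalSpace.Compacts.coe_sup,
      le_antisymm (lamR_union_le T x₀ _ _) (lamR_union_disjoint T x₀ h₁ h₂ hd),
      Real.toNNReal_add (lamR_nonneg T x₀ _) (lamR_nonneg T x₀ _)]
  sup_le' K₁ K₂ := by
    show Real.toNNReal (lamR T x₀ ↑(K₁ ⊔ K₂)) ≤ _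
    calc Real.toNNReal (lamR T x₀ ↑(K₁ ⊔ K₂))
        ≤ Real.toNNReal (lamR T x₀ ↑K₁ + lamR T x₀ ↑K₂) := by
          refine Real.toNNReal_mono ?_
          rw [TopologicalSpace.Compacts.coe_sup]
          exact lamR_union_le T x₀ _ _
      _ = _ := Real.toNNReal_add (lamR_nonneg T x₀ _) (lamR_nonneg T x₀ _)

end KB3

section KB4

open MeasureTheory TopologicalSpace

variable {X : Type*} [TopologicalSpace X] [CompactSpace X] [T2Space X]
  [MeasurableSpace X] [BorelSpace X]
variable (T : X → X) (x₀ : X)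

lemma kbMeasure_univ : (kbContent T x₀).measure Set.univ = 1 := by
  rw [Content.measure_apply _ MeasurableSet.univ,
    (kbContent T x₀).outerMeasure_of_isOpen Set.univ isOpen_univ]
  have h1 : (kbContent T x₀).innerContent ⟨Set.univ, isOpen_univ⟩
      ≤ kbContent T x₀ ⟨Set.univ, isCompact_univ⟩ :=
    (kbContent T x₀).innerContent_le _ _ subset_rfl
  have h2 : (kbContent T x₀ ⟨Set.univ, isCompact_univ⟩ : ℝ≥0∞)
      ≤ (kbContent T x₀).innerContent ⟨Set.univ, isOpen_univ⟩ :=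
    (kbContent T x₀).le_innerContent _ _ subset_rfl
  have h3 : (kbContent T x₀ ⟨Set.univ, isCompact_univ⟩ : ℝ≥0∞) = 1 := by
    show ((Real.toNNReal (lamR T x₀ Set.univ) : ℝ≥0) : ℝ≥0∞) = 1
    rw [lamR_univ]
    simp
  rw [le_antisymm h1 h2, h3]

lemma one_le_kbMeasure_of_orbit {K : Set X} (hK : IsCompact K)
    (horb : ∀ n, T^[n] x₀ ∈ K) : 1 ≤ (kbContent T x₀).measure K := by
  rw [Content.measure_apply _ hK.isClosed.measurableSet]
  refine le_trans ?_ ((kbContent T x₀).le_outerMeasure_compacts ⟨K, hK⟩)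
  show (1:ℝ≥0∞) ≤ ((Real.toNNReal (lamR T x₀ K) : ℝ≥0) : ℝ≥0∞)
  rw [ENNReal.one_le_coe_iff]
  have := Real.toNNReal_mono (one_le_lamR_of_orbit T x₀ horb)
  simpa using this

lemma kbMeasure_preimage_le_of_isOpen (hT : Continuous T) {U : Set X} (hU : IsOpen U) :
    (kbContent T x₀).measure (T ⁻¹' U) ≤ (kbContent T x₀).measure U := by
  rw [Content.measure_apply _ (hU.preimage hT).measurableSet,
    Content.measure_apply _ hU.measurableSet,
    (kbContent T x₀).outerMeasure_of_isOpen _ (hU.preimage hT),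
    (kbContent T x₀).outerMeasure_of_isOpen _ hU]
  rw [Content.innerContent, Content.innerContent]
  refine iSup₂_le fun K hK => ?_
  have h1 : (kbContent T x₀ K : ℝ≥0∞) ≤ kbContent T x₀ (K.map T hT) := by
    show ((Real.toNNReal (lamR T x₀ ↑K) : ℝ≥0) : ℝ≥0∞) ≤ _
    refine ENNReal.coe_le_coe.mpr (Real.toNNReal_mono ?_)
    have := lamR_le_image T x₀ hT (K : Set X)
    rwa [← Compacts.coe_map hT K] at this
  refine h1.trans ((kbContent T x₀).le_innerContent _ _ ?_)
  rw [Compacts.coe_map]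
  exact Set.image_subset_iff.mpr hK

lemma kbMeasure_map_le (hT : Continuous T) :
    Measure.map T ((kbContent T x₀).measure) ≤ (kbContent T x₀).measure := by
  refine Measure.le_iff.mpr fun s hs => ?_
  rw [Measure.map_apply hT.measurable hs]
  rw [Set.measure_eq_iInf_isOpen s ((kbContent T x₀).measure)]
  refine le_iInf fun U => le_iInf fun hsU => le_iInf fun hU => ?_
  exact (measure_mono (Set.preimage_mono hsU)).trans
    (kbMeasure_preimage_le_of_isOpen T x₀ hT hU)

lemma kbMeasure_map_eq (hT : Continuous T) :
    Measure.map T ((kbContent T x₀).measure) = (kbContent T x₀).measure := by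
  set ν := (kbContent T x₀).measure with hν
  have hle := kbMeasure_map_le T x₀ hT
  have huniv : ν Set.univ ≤ (Measure.map T ν) Set.univ := by
    rw [Measure.map_apply hT.measurable MeasurableSet.univ, Set.preimage_univ]
  have hfin : ν Set.univ ≠ ⊤ := by rw [kbMeasure_univ]; exact ENNReal.one_ne_top
  ext s hs
  refine le_antisymm (Measure.le_iff.mp hle s hs) ?_
  have h1 : ν s + ν sᶜ = ν Set.univ := measure_add_measure_compl hs
  have h2 : (Measure.map T ν) s + (Measure.map T ν) sᶜ = (Measure.map T ν) Set.univ :=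
    measure_add_measure_compl hs
  have h3 : ν s + ν sᶜ ≤ (Measure.map T ν) s + ν sᶜ := by
    rw [h1]
    refine le_trans huniv ?_
    rw [← h2]
    exact add_le_add le_rfl (Measure.le_iff.mp hle sᶜ hs.compl)
  exact ENNReal.le_of_add_le_add_right
    (ne_top_of_le_ne_top hfin (measure_mono (Set.subset_univ _))) h3

end KB4

section Main

open MeasureTheory

variable {X : Type*} [TopologicalSpace X] [CompactSpace X] [T2Space X] [Nonempty X]
  [MeasurableSpace X] [BorelSpace X]

/-- Krylov–Bogolyubov + unique ergodicity: any compact set containing a forward orbit has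
full measure. -/
lemma kb_full_measure (T : X → X) (hT : Continuous T)
    (μ : Measure X) [IsProbabilityMeasure μ]
    (huniq : ∀ ν : Measure X, IsProbabilityMeasure ν → ν.Regular →
      Measure.map T ν = ν → ν = μ)
    {K : Set X} (hK : IsCompact K) (x₀ : X) (horb : ∀ n, T^[n] x₀ ∈ K) :
    μ K = 1 := by
  set ν := (kbContent T x₀).measure with hν
  have hprob : IsProbabilityMeasure ν := ⟨kbMeasure_univ T x₀⟩
  have hreg : ν.Regular := inferInstance
  have heq : ν = μ := huniq ν hprob hreg (kbMeasure_map_eq T x₀ hT)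
  have h1 : 1 ≤ μ K := heq ▸ one_le_kbMeasure_of_orbit T x₀ hK horb
  exact le_antisymm prob_le_one h1

/-- A continuous eigenfunction of a uniquely ergodic system which is not identically zero
is a.e. nonvanishing. -/
lemma eigen_ae_ne_zero (T : X → X) (hT : Continuous T)
    (μ : Measure X) [IsProbabilityMeasure μ]
    (huniq : ∀ ν : Measure X, IsProbabilityMeasure ν → ν.Regular →
      Measure.map T ν = ν → ν = μ)
    {u : X → ℂ} {lam : ℂ} (hu : Continuous u) (hnz : ¬ ∀ x, u x = 0)
    (hlam : ‖lam‖ = 1) (heig : ∀ x, u (T x) = lam * u x) :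
    μ {x | u x ≠ 0} = 1 := by
  push_neg at hnz
  obtain ⟨x₀, hx₀⟩ := hnz
  set K : Set X := {x | ‖u x₀‖ ≤ ‖u x‖} with hK
  have hKclosed : IsClosed K := isClosed_le continuous_const hu.norm
  have horb : ∀ n, T^[n] x₀ ∈ K := by
    intro n
    have : ‖u (T^[n] x₀)‖ = ‖u x₀‖ := by
      induction n with
      | zero => simp
      | succ n ih =>
          rw [Function.iterate_succ_apply', heig, norm_mul, hlam, one_mul, ih]
    show ‖u x₀‖ ≤ ‖u (T^[n] x₀)‖
    rw [this]
  have hfull : μ K = 1 := kb_full_measure T hT μ huniq hKclosed.isCompact x₀ horb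
  have hsub : K ⊆ {x | u x ≠ 0} := by
    intro x hx
    have h0 : 0 < ‖u x₀‖ := norm_pos_iff.mpr hx₀
    have : 0 < ‖u x‖ := lt_of_lt_of_le h0 hx
    exact fun h => by simp [h] at this
  refine le_antisymm prob_le_one ?_
  calc (1:ℝ≥0∞) = μ K := hfull.symm
    _ ≤ μ {x | u x ≠ 0} := measure_mono hsub

end Main

/-- For a uniquely ergodic system `(X, T, μ)`, the set of unimodular eigenvalues admitting a
nonzero continuous eigenfunction is a subgroup of the circle group: it contains `1`, is closed
under multiplication, and is closed under inversion. -/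
theorem stmt10 {X : Type*} [TopologicalSpace X] [CompactSpace X] [T2Space X] [Nonempty X]
    [MeasurableSpace X] [BorelSpace X]
    (T : X → X) (hT : Continuous T)
    (μ : Measure X) [IsProbabilityMeasure μ] [μ.Regular] (hμ : Measure.map T μ = μ)
    (huniq : ∀ ν : Measure X, IsProbabilityMeasure ν → ν.Regular →
      Measure.map T ν = ν → ν = μ)
    (S : Set ℂ)
    (hS : S = {lam : ℂ | ‖lam‖ = 1 ∧ ∃ u : X → ℂ, Continuous u ∧ (¬ ∀ x, u x = 0) ∧
      ∀ x, u (T x) = lam * u x}) :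
    (1 ∈ S) ∧ (∀ l₁ ∈ S, ∀ l₂ ∈ S, l₁ * l₂ ∈ S) ∧ (∀ l ∈ S, l⁻¹ ∈ S) := by
  subst hS
  refine ⟨⟨by simp, fun _ => 1, continuous_const, ?_, fun x => by simp⟩, ?_, ?_⟩
  · intro h
    exact one_ne_zero (h (Classical.arbitrary X))
  · rintro l₁ ⟨hl₁, u₁, hu₁c, hu₁nz, hu₁e⟩ l₂ ⟨hl₂, u₂, hu₂c, hu₂nz, hu₂e⟩
    refine ⟨by rw [norm_mul, hl₁, hl₂, one_mul], fun x => u₁ x * u₂ x,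
      hu₁c.mul hu₂c, ?_, fun x => by
        show u₁ (T x) * u₂ (T x) = l₁ * l₂ * (u₁ x * u₂ x)
        rw [hu₁e, hu₂e]; ring⟩
    intro h
    have h₁ := eigen_ae_ne_zero T hT μ huniq hu₁c hu₁nz hl₁ hu₁e
    have h₂ := eigen_ae_ne_zero T hT μ huniq hu₂c hu₂nz hl₂ hu₂e
    have hA : MeasurableSet {x | u₁ x ≠ 0} :=
      (isOpen_compl_iff.mpr (isClosed_eq hu₁c continuous_const)).measurableSet
    have hB : MeasurableSet {x | u₂ x ≠ 0} :=
      (isOpen_compl_iff.mpr (isClosed_eq hu₂c continuous_const)).measurableSet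
    have hAc : μ {x | u₁ x ≠ 0}ᶜ = 0 := by
      rw [measure_compl hA (measure_ne_top μ _), h₁, measure_univ, tsub_self]
    have hBc : μ {x | u₂ x ≠ 0}ᶜ = 0 := by
      rw [measure_compl hB (measure_ne_top μ _), h₂, measure_univ, tsub_self]
    have hcover : (Set.univ : Set X) ⊆ {x | u₁ x ≠ 0}ᶜ ∪ {x | u₂ x ≠ 0}ᶜ := by
      intro x _
      rcases mul_eq_zero.mp (h x) with h' | h'
      · exact Or.inl (by simp [h'])
      · exact Or.inr (by simp [h'])
    have : (1:ℝ≥0∞) ≤ 0 := by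
      calc (1:ℝ≥0∞) = μ Set.univ := measure_univ.symm
        _ ≤ μ ({x | u₁ x ≠ 0}ᶜ ∪ {x | u₂ x ≠ 0}ᶜ) := measure_mono hcover
        _ ≤ μ {x | u₁ x ≠ 0}ᶜ + μ {x | u₂ x ≠ 0}ᶜ := measure_union_le _ _
        _ = 0 := by rw [hAc, hBc, add_zero]
    exact absurd this (by simp)
  · rintro l ⟨hl, u, huc, hunz, hue⟩
    have hlne : l ≠ 0 := by
      intro h
      rw [h] at hl
      simp at hl
    have hconj : (starRingEnd ℂ) l = l⁻¹ := by
      have h1 : l * (starRingEnd ℂ) l = 1 := by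
        rw [Complex.mul_conj]
        norm_cast
        rw [Complex.normSq_eq_norm_sq]
        simp only [hl]
        norm_num
      exact eq_inv_of_mul_eq_one_right h1
    refine ⟨by rw [norm_inv, hl, inv_one], fun x => (starRingEnd ℂ) (u x),
      Complex.continuous_conj.comp huc, ?_, ?_⟩
    · push_neg at hunz ⊢
      obtain ⟨x, hx⟩ := hunz
      exact ⟨x, by simpa using hx⟩
    · intro x
      show (starRingEnd ℂ) (u (T x)) = l⁻¹ * (starRingEnd ℂ) (u x)
      rw [hue, map_mul, hconj]
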